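/- Let m be an odd positive integer. For every C ∈ R, the number of quadruples (X,Y,Z,W) ∈ 𝒯⁴ with X + Y + Z − W = C equals 2^{2m} if C ∈ 2R; equals (2^m + 1)·2^m if C ∉ 2R but C ∈ 𝒯 + 𝒯 (i.e., C = X′ + Y′ for some X′, Y′ ∈ 𝒯); and equals (2^m − 1)·2^m if C ∉ 𝒯 + 𝒯. -/

import Mathlib

open Polynomial
open scoped Classical

open scoped Classical

lemma zcount {k : Type*} [Field k] [Fintype k] (A B : k) :
    Nat.card {z : k // z * A = B} =
      if A = 0 then (if B = 0 then Fintype.card k else 0) else 1 := by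
  by_cases hA : A = 0
  · by_cases hB : B = 0
    · rw [if_pos hA, if_pos hB]
      rw [Nat.card_congr (Equiv.subtypeUnivEquiv (fun z => by simp [hA, hB]))]
      exact Nat.card_eq_fintype_card
    · rw [if_pos hA, if_neg hB]
      haveI : IsEmpty {z : k // z * A = B} :=
        ⟨fun z => hB (by simpa [hA] using z.prop.symm)⟩
      exact Nat.card_of_isEmpty
  · rw [if_neg hA]
    have heq : ∀ z : k, z * A = B ↔ z = B * A⁻¹ := by
      intro z
      constructor
      · intro h; field_simp [← h]; exact h
      · rintro rfl; field_simp
    rw [Nat.card_congr (Equiv.subtypeEquivRight heq), Nat.card_eq_fintype_card]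
    exact Fintype.card_subtype_eq (B * A⁻¹)

lemma countA {k : Type*} [Field k] [Fintype k] (h2 : (2:k) = 0) (σ γ : k) :
    Nat.card {v : k × k × k //
        v.1 * v.2.1 + v.1 * v.2.2 + v.2.1 * v.2.2 + σ * (v.1 + v.2.1 + v.2.2) = γ + σ * σ} =
      (Fintype.card k) ^ 2 - Fintype.card k
        + Fintype.card k * Nat.card {x : k // x * (x + σ) = γ} := by
  classical
  -- rewrite as a sigma over the first two coordinates
  have e1 : {v : k × k × k //
        v.1 * v.2.1 + v.1 * v.2.2 + v.2.1 * v.2.2 + σ * (v.1 + v.2.1 + v.2.2) = γ + σ * σ} ≃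
      Σ p : k × k, {z : k // z * (p.1 + p.2 + σ) = γ + σ * σ - p.1 * p.2 - σ * (p.1 + p.2)} :=
    { toFun := fun v => ⟨(v.1.1, v.1.2.1), ⟨v.1.2.2, by linear_combination v.2⟩⟩
      invFun := fun pz => ⟨(pz.1.1, pz.1.2, pz.2.1), by linear_combination pz.2.2⟩
      left_inv := fun ⟨⟨x, y, z⟩, h⟩ => rfl
      right_inv := fun ⟨⟨x, y⟩, ⟨z, h⟩⟩ => rfl }
  rw [Nat.card_congr e1]
  rw [Nat.card_eq_fintype_card, Fintype.card_sigma]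
  have hterm : ∀ p : k × k,
      Fintype.card {z : k // z * (p.1 + p.2 + σ) = γ + σ * σ - p.1 * p.2 - σ * (p.1 + p.2)} =
      if p.1 + p.2 + σ = 0 then
        (if γ + σ * σ - p.1 * p.2 - σ * (p.1 + p.2) = 0 then Fintype.card k else 0) else 1 := by
    intro p
    rw [← Nat.card_eq_fintype_card]
    exact zcount _ _
  rw [Finset.sum_congr rfl (fun p _ => hterm p)]
  rw [Finset.sum_ite]
  have hcard1 : (Finset.univ.filter fun p : k × k => ¬ (p.1 + p.2 + σ = 0)).card =
      (Fintype.card k) ^ 2 - Fintype.card k := by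
    have h0 : (Finset.univ.filter fun p : k × k => p.1 + p.2 + σ = 0).card = Fintype.card k := by
      rw [← Fintype.card_subtype]
      refine Fintype.card_congr ?_
      exact
        { toFun := fun p => p.1.1
          invFun := fun x => ⟨(x, -x - σ), by simp; ring⟩
          left_inv := fun ⟨⟨x, y⟩, h⟩ => by
            refine Subtype.ext (Prod.ext rfl ?_)
            dsimp only
            linear_combination -h
          right_inv := fun x => rfl }
    have htot := Finset.card_filter_add_card_filter_not
      (s := (Finset.univ : Finset (k × k))) (fun p : k × k => p.1 + p.2 + σ = 0)
    have huniv : (Finset.univ : Finset (k × k)).card = (Fintype.card k) ^ 2 := by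
      simp [Finset.card_univ, sq]
    omega
  have hcard2 : (Finset.univ.filter (fun p : k × k => p.1 + p.2 + σ = 0)).filter
        (fun p : k × k => γ + σ * σ - p.1 * p.2 - σ * (p.1 + p.2) = 0) =
      Finset.univ.filter (fun p : k × k =>
        (p.1 + p.2 + σ = 0) ∧ γ + σ * σ - p.1 * p.2 - σ * (p.1 + p.2) = 0) := by
    rw [Finset.filter_filter]
  have hcard3 : (Finset.univ.filter (fun p : k × k =>
        (p.1 + p.2 + σ = 0) ∧ γ + σ * σ - p.1 * p.2 - σ * (p.1 + p.2) = 0)).card =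
      Nat.card {x : k // x * (x + σ) = γ} := by
    rw [← Fintype.card_subtype, ← Nat.card_eq_fintype_card]
    refine Nat.card_congr ?_
    refine
      { toFun := fun p => ⟨p.1.1, ?_⟩
        invFun := fun x => ⟨(x.1, x.1 + σ), ?_⟩
        left_inv := ?_
        right_inv := fun x => Subtype.ext rfl }
    · obtain ⟨⟨x, y⟩, h1, hB⟩ := p
      have hy : y = x + σ := by linear_combination h1 - (x + σ) * h2
      dsimp only at hy ⊢
      subst hy
      linear_combination -hB - (σ*x) * h2
    · constructor
      · dsimp only; linear_combination (x.1 + σ) * h2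
      · have := x.2
        dsimp only
        linear_combination -this - (σ * x.1) * h2
    · rintro ⟨⟨x, y⟩, h1, hB⟩
      refine Subtype.ext (Prod.ext rfl ?_)
      have hy : y = x + σ := by linear_combination h1 - (x + σ) * h2
      dsimp only
      exact hy.symm
  rw [Finset.sum_ite, hcard2]
  simp only [Finset.sum_const, Finset.sum_const_zero, smul_eq_mul, mul_one, mul_zero, add_zero]
  rw [hcard1, hcard3]
  ring

lemma rootcount_zero {k : Type*} [Field k] [Fintype k] (h2 : (2:k) = 0) (γ : k) :
    Nat.card {x : k // x * (x + 0) = γ} = 1 := by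
  have hinj : Function.Injective (fun x : k => x * x) := by
    intro a b h
    dsimp at h
    have : (a - b) ^ 2 = 0 := by linear_combination h + (b * b - a * b) * h2
    have := pow_eq_zero_iff (n := 2) (by norm_num) |>.mp this
    exact sub_eq_zero.mp this
  obtain ⟨x₀, hx₀⟩ := (Finite.injective_iff_surjective.mp hinj) γ
  have hch : ∀ x : k, x * (x + 0) = γ ↔ x = x₀ := by
    intro x
    constructor
    · intro hx
      refine hinj ?_
      show x * x = x₀ * x₀
      have hx₀' : x₀ * x₀ = γ := hx₀
      rw [hx₀']; linear_combination hx
    · rintro rfl; rw [add_zero]; exact hx₀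
  rw [Nat.card_congr (Equiv.subtypeEquivRight hch), Nat.card_eq_fintype_card]
  exact Fintype.card_subtype_eq x₀

lemma rootcount_ne {k : Type*} [Field k] [Fintype k] (h2 : (2:k) = 0) (σ γ : k) (hσ : σ ≠ 0) :
    Nat.card {x : k // x * (x + σ) = γ} =
      if ∃ a b : k, a + b = σ ∧ a * b = γ then 2 else 0 := by
  split_ifs with h
  · obtain ⟨a, b, hab, hmul⟩ := h
    have hb : b = a + σ := by linear_combination hab - a * h2
    subst hb
    have hchar : ∀ x : k, x * (x + σ) = γ ↔ (x = a ∨ x = a + σ) := by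
      intro x
      constructor
      · intro hx
        have : (x - a) * (x - (a + σ)) = 0 := by
          linear_combination hx - hmul + (a * a + a * σ - a * x - σ * x) * h2
        rcases mul_eq_zero.mp this with h' | h'
        · exact Or.inl (sub_eq_zero.mp h')
        · exact Or.inr (sub_eq_zero.mp h')
      · rintro (rfl | rfl)
        · exact hmul
        · linear_combination hmul + (a * σ + σ * σ) * h2
    have hne : a ≠ a + σ := fun h' => hσ (left_eq_add.mp h')
    rw [Nat.card_congr (Equiv.subtypeEquivRight hchar)]
    have : Nat.card ({a, a + σ} : Set k) = 2 := by
      rw [Nat.card_coe_set_eq, Set.ncard_pair hne]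
    rw [← this]
    exact Nat.card_congr (Equiv.setCongr (show {x : k | x = a ∨ x = a + σ} = {a, a + σ} by
      ext x; simp))
  · haveI : IsEmpty {x : k // x * (x + σ) = γ} := by
      refine ⟨fun x => h ⟨x.1, x.1 + σ, ?_, x.2⟩⟩
      linear_combination x.1 * h2
    exact Nat.card_of_isEmpty

lemma coeff_two : ∀ c : ZMod 4,
    ZMod.castHom (show (2:ℕ) ∣ 4 by norm_num) (ZMod 2) c = 0 → ∃ d, c = 2 * d := by decide

lemma coeff_two' : ∀ c : ZMod 4, 2 * c = 0 → ∃ d, c = 2 * d := by decide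

lemma poly_two {p : Polynomial (ZMod 4)} (h : ∀ n, ∃ d : ZMod 4, p.coeff n = 2 * d) :
    ∃ r, p = 2 * r := by
  classical
  refine ⟨∑ i ∈ p.support, Polynomial.monomial i (Classical.choose (h i)), ?_⟩
  rw [Finset.mul_sum]
  conv_lhs => rw [p.as_sum_support]
  refine Finset.sum_congr rfl (fun i _ => ?_)
  rw [show (2 : Polynomial (ZMod 4)) = Polynomial.C 2 from (map_ofNat Polynomial.C 2).symm,
    Polynomial.C_mul_monomial, ← (Classical.choose_spec (h i) : p.coeff i = 2 * _)]

open Polynomial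

noncomputable section

instance : Nontrivial (ZMod 4) := ⟨0, 1, by decide⟩

abbrev cmod : ZMod 4 →+* ZMod 2 := ZMod.castHom (show (2:ℕ) ∣ 4 by norm_num) (ZMod 2)

/-- reduction mod 2 from GR(4,m) to its residue field -/
def piMap (f : Polynomial (ZMod 4)) : AdjoinRoot f →+* AdjoinRoot (f.map cmod) :=
  AdjoinRoot.lift ((AdjoinRoot.of (f.map cmod)).comp cmod) (AdjoinRoot.root (f.map cmod))
    (by rw [← Polynomial.eval₂_map, AdjoinRoot.eval₂_root])

lemma piMap_mk (f : Polynomial (ZMod 4)) (p : Polynomial (ZMod 4)) :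
    piMap f (AdjoinRoot.mk f p) = AdjoinRoot.mk (f.map cmod) (p.map cmod) := by
  rw [piMap, AdjoinRoot.lift_mk, ← AdjoinRoot.aeval_eq, Polynomial.aeval_def,
    AdjoinRoot.algebraMap_eq, Polynomial.eval₂_map]

lemma piMap_surj (f : Polynomial (ZMod 4)) : Function.Surjective (piMap f) := by
  intro s
  obtain ⟨q, rfl⟩ := AdjoinRoot.mk_surjective s
  have hc : Function.Surjective (cmod : ZMod 4 →+* ZMod 2) := by decide
  obtain ⟨p, hp⟩ := Polynomial.map_surjective cmod hc q
  exact ⟨AdjoinRoot.mk f p, by rw [piMap_mk, hp]⟩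

lemma two_S_eq_zero (f : Polynomial (ZMod 4)) : (2 : AdjoinRoot (f.map cmod)) = 0 := by
  calc (2 : AdjoinRoot (f.map cmod)) = AdjoinRoot.of (f.map cmod) (2 : ZMod 2) :=
        (map_ofNat _ 2).symm
    _ = AdjoinRoot.of (f.map cmod) 0 := by rw [show (2 : ZMod 2) = 0 by decide]
    _ = 0 := map_zero _

lemma four_R_eq_zero (f : Polynomial (ZMod 4)) : (2 : AdjoinRoot f) * 2 = 0 := by
  have h40 : (4 : AdjoinRoot f) = 0 := by
    rw [← map_ofNat (AdjoinRoot.of f) 4, show (4 : ZMod 4) = 0 by decide, map_zero]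
  linear_combination h40

lemma piMap_ker {f : Polynomial (ZMod 4)} (hmonic : f.Monic) (t : AdjoinRoot f) :
    piMap f t = 0 ↔ ∃ x, t = 2 * x := by
  constructor
  · intro h
    obtain ⟨p, rfl⟩ := AdjoinRoot.mk_surjective t
    have hmk : AdjoinRoot.mk f p = AdjoinRoot.mk f (p %ₘ f) := by
      rw [AdjoinRoot.mk_eq_mk]
      exact ⟨p /ₘ f, by linear_combination (Polynomial.modByMonic_add_div p f).symm⟩
    rw [hmk, piMap_mk] at h
    have hdvd : f.map cmod ∣ (p %ₘ f).map cmod := AdjoinRoot.mk_eq_zero.mp h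
    have hdeglt : ((p %ₘ f).map cmod).degree < (f.map cmod).degree := by
      calc ((p %ₘ f).map cmod).degree ≤ (p %ₘ f).degree := Polynomial.degree_map_le
        _ < f.degree := Polynomial.degree_modByMonic_lt p hmonic
        _ = (f.map cmod).degree := (hmonic.degree_map cmod).symm
    have hzero : (p %ₘ f).map cmod = 0 := Polynomial.eq_zero_of_dvd_of_degree_lt hdvd hdeglt
    have hco : ∀ n, ∃ d : ZMod 4, (p %ₘ f).coeff n = 2 * d := by
      intro n
      refine coeff_two _ ?_
      have := congrArg (fun q => Polynomial.coeff q n) hzero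
      simpa [Polynomial.coeff_map] using this
    obtain ⟨r, hr⟩ := poly_two hco
    exact ⟨AdjoinRoot.mk f r, by rw [hmk, hr, map_mul, map_ofNat]⟩
  · rintro ⟨x, rfl⟩
    rw [map_mul, map_ofNat, two_S_eq_zero, zero_mul]

lemma ann_two {f : Polynomial (ZMod 4)} (hmonic : f.Monic) (t : AdjoinRoot f)
    (h : 2 * t = 0) : ∃ x, t = 2 * x := by
  obtain ⟨p, rfl⟩ := AdjoinRoot.mk_surjective t
  have hmk : AdjoinRoot.mk f p = AdjoinRoot.mk f (p %ₘ f) := by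
    rw [AdjoinRoot.mk_eq_mk]
    exact ⟨p /ₘ f, by linear_combination (Polynomial.modByMonic_add_div p f).symm⟩
  rw [hmk] at h ⊢
  have h0 : AdjoinRoot.mk f (2 * (p %ₘ f)) = 0 := by rw [map_mul, map_ofNat]; exact h
  obtain ⟨u, hu⟩ := AdjoinRoot.mk_eq_zero.mp h0
  have hu0 : u = 0 := by
    by_contra hne
    have hdlt : (2 * (p %ₘ f)).degree < f.degree := by
      calc (2 * (p %ₘ f)).degree ≤ (2 : Polynomial (ZMod 4)).degree + (p %ₘ f).degree :=
            Polynomial.degree_mul_le _ _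
        _ ≤ 0 + (p %ₘ f).degree := by
            gcongr
            rw [show (2 : Polynomial (ZMod 4)) = Polynomial.C 2 from (map_ofNat _ 2).symm]
            exact Polynomial.degree_C_le
        _ = (p %ₘ f).degree := zero_add _
        _ < f.degree := Polynomial.degree_modByMonic_lt p hmonic
    have hdge : f.degree ≤ (f * u).degree := by
      rw [mul_comm, hmonic.degree_mul]
      exact le_add_of_nonneg_left (Polynomial.zero_le_degree_iff.mpr hne)
    rw [← hu] at hdge
    exact absurd hdlt (not_lt.mpr hdge)
  rw [hu0, mul_zero] at hu
  have hco : ∀ n, ∃ d : ZMod 4, (p %ₘ f).coeff n = 2 * d := by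
    intro n
    refine coeff_two' _ ?_
    have := congrArg (fun q => Polynomial.coeff q n) hu
    simpa using this
  obtain ⟨r, hr⟩ := poly_two hco
  exact ⟨AdjoinRoot.mk f r, by rw [hr, map_mul, map_ofNat]⟩

end

set_option maxHeartbeats 2000000 in
/-- With `R = GR(4,m)` realized as `(ℤ/4ℤ)[x]/(f)` and
`𝒯 = {z : z ^ 2^m = z}` the Teichmüller set (`m` odd), for every `C ∈ R` the number of
quadruples `(X,Y,Z,W) ∈ 𝒯⁴` with `X + Y + Z - W = C` equals `2^(2m)` if `C ∈ 2R`,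
`(2^m + 1)·2^m` if `C ∉ 2R` but `C ∈ 𝒯 + 𝒯`, and `(2^m - 1)·2^m` if `C ∉ 𝒯 + 𝒯`. -/
theorem statement8 (m : ℕ) (hm : Odd m) (hmpos : 0 < m)
    (f : Polynomial (ZMod 4)) (hmonic : f.Monic) (hdeg : f.natDegree = m)
    (hirr : Irreducible (f.map (ZMod.castHom (show (2:ℕ) ∣ 4 by norm_num) (ZMod 2))))
    (C : AdjoinRoot f) :
    Nat.card {t : AdjoinRoot f × AdjoinRoot f × AdjoinRoot f × AdjoinRoot f //
        t.1 ^ 2 ^ m = t.1 ∧ t.2.1 ^ 2 ^ m = t.2.1 ∧ t.2.2.1 ^ 2 ^ m = t.2.2.1 ∧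
        t.2.2.2 ^ 2 ^ m = t.2.2.2 ∧
        t.1 + t.2.1 + t.2.2.1 - t.2.2.2 = C} =
      if ∃ x : AdjoinRoot f, C = 2 * x then 2 ^ (2 * m)
      else if ∃ X Y : AdjoinRoot f, X ^ 2 ^ m = X ∧ Y ^ 2 ^ m = Y ∧ C = X + Y then
        (2 ^ m + 1) * 2 ^ m
      else (2 ^ m - 1) * 2 ^ m := by
  classical
  haveI : Fact (Irreducible (f.map cmod)) := ⟨hirr⟩
  -- the residue field S
  set S := AdjoinRoot (f.map cmod) with hSdef
  have hmonic2 : (f.map cmod).Monic := hmonic.map cmod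
  -- Fintype and cardinality of S
  let pb : PowerBasis (ZMod 2) S := AdjoinRoot.powerBasis' hmonic2
  haveI : Fintype S := Fintype.ofEquiv (Fin pb.dim → ZMod 2) pb.basis.equivFun.toEquiv.symm
  have hq : Fintype.card S = 2 ^ m := by
    rw [Fintype.card_congr pb.basis.equivFun.toEquiv, Fintype.card_fun]
    have hdim : pb.dim = m := by
      rw [show pb.dim = (f.map cmod).natDegree from rfl, hmonic.natDegree_map, hdeg]
    rw [hdim, ZMod.card, Fintype.card_fin]
  have hS2 : (2 : S) = 0 := two_S_eq_zero f
  have h4 : (2 : AdjoinRoot f) * 2 = 0 := four_R_eq_zero f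
  have hfrob : ∀ s : S, s ^ (2 ^ m) = s := fun s => by rw [← hq]; exact FiniteField.pow_card s
  have hker := piMap_ker hmonic
  have hsurj := piMap_surj f
  -- basic consequences
  have hsqeq : ∀ a b : AdjoinRoot f, piMap f a = piMap f b → a ^ 2 = b ^ 2 := by
    intro a b h
    obtain ⟨x, hx⟩ := (hker (a - b)).mp (by rw [map_sub, h, sub_self])
    have ha : a = b + 2 * x := by linear_combination hx
    rw [ha]; linear_combination (b * x + x * x) * h4
  have h2eq : ∀ a b : AdjoinRoot f, piMap f a = piMap f b → 2 * a = 2 * b := by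
    intro a b h
    obtain ⟨x, hx⟩ := (hker (a - b)).mp (by rw [map_sub, h, sub_self])
    linear_combination 2 * hx + x * h4
  have h2inj : ∀ a b : AdjoinRoot f, 2 * a = 2 * b → piMap f a = piMap f b := by
    intro a b h
    obtain ⟨x, hx⟩ := ann_two hmonic (a - b) (by linear_combination h)
    have : piMap f (a - b) = 0 := by
      rw [hx, map_mul, map_ofNat, hS2, zero_mul]
    rw [map_sub] at this
    exact sub_eq_zero.mp this
  have hSsqinj : ∀ a b : S, a ^ 2 = b ^ 2 → a = b := by
    intro a b h
    have h0 : (a - b) ^ 2 = 0 := by linear_combination h + (b * b - a * b) * hS2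
    exact sub_eq_zero.mp (pow_eq_zero_iff (n := 2) (by norm_num) |>.mp h0)
  have hRsq : ∀ r : AdjoinRoot f, (r ^ 2) ^ (2 ^ m) = r ^ 2 := by
    intro r
    have h1 : piMap f (r ^ (2 ^ m)) = piMap f r := by rw [map_pow]; exact hfrob _
    calc (r ^ 2) ^ (2 ^ m) = (r ^ (2 ^ m)) ^ 2 := by
          rw [← pow_mul, ← pow_mul, mul_comm]
      _ = r ^ 2 := hsqeq _ _ h1
  have hm2 : 2 ^ (m - 1) * 2 = 2 ^ m := by
    rw [← pow_succ]; congr 1; omega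
  have hρsq : ∀ X : AdjoinRoot f, X ^ 2 ^ m = X → (X ^ 2 ^ (m - 1)) ^ 2 = X := by
    intro X hX; rw [← pow_mul, hm2]; exact hX
  -- key constants
  set σS : S := (piMap f C) ^ 2 ^ (m - 1) with hσSdef
  set σh : AdjoinRoot f := C ^ 2 ^ (m - 1) with hσhdef
  have hσh : piMap f σh = σS := by rw [hσhdef, map_pow]
  have hσhsq : σh ^ 2 = C ^ 2 ^ m := by rw [hσhdef, ← pow_mul, hm2]
  have hσSsq : σS ^ 2 = piMap f C := by rw [hσSdef, ← pow_mul, hm2]; exact hfrob _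
  obtain ⟨g, hg⟩ : ∃ g, C - C ^ 2 ^ m = 2 * g :=
    (hker _).mp (by rw [map_sub, map_pow, hfrob, sub_self])
  set γS : S := piMap f g with hγSdef
  -- the surjInv section
  set L : S → AdjoinRoot f := Function.surjInv hsurj with hLdef
  have hL : ∀ s : S, piMap f (L s) = s := fun s => Function.surjInv_eq hsurj s
  have hρL : ∀ a : S, (piMap f ((L a) ^ 2)) ^ 2 ^ (m - 1) = a := by
    intro a
    rw [map_pow, hL, ← pow_mul, mul_comm 2 (2 ^ (m - 1)), hm2]
    exact hfrob a
  -- the master equivalence lemma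
  have big : ∀ X Y Z W : AdjoinRoot f,
      X ^ 2 ^ m = X → Y ^ 2 ^ m = Y → Z ^ 2 ^ m = Z → W ^ 2 ^ m = W →
      (X + Y + Z - W = C ↔
        ((piMap f X) ^ 2 ^ (m - 1) + (piMap f Y) ^ 2 ^ (m - 1) + (piMap f Z) ^ 2 ^ (m - 1)
            + (piMap f W) ^ 2 ^ (m - 1) = σS ∧
          (piMap f X) ^ 2 ^ (m - 1) * (piMap f Y) ^ 2 ^ (m - 1)
            + (piMap f X) ^ 2 ^ (m - 1) * (piMap f Z) ^ 2 ^ (m - 1)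
            + (piMap f X) ^ 2 ^ (m - 1) * (piMap f W) ^ 2 ^ (m - 1)
            + (piMap f Y) ^ 2 ^ (m - 1) * (piMap f Z) ^ 2 ^ (m - 1)
            + (piMap f Y) ^ 2 ^ (m - 1) * (piMap f W) ^ 2 ^ (m - 1)
            + (piMap f Z) ^ 2 ^ (m - 1) * (piMap f W) ^ 2 ^ (m - 1)
            + (piMap f W) ^ 2 ^ (m - 1) * (piMap f W) ^ 2 ^ (m - 1) = γS)) := by
    intro X Y Z W hX hY hZ hW
    set x := X ^ 2 ^ (m - 1) with hxdef
    set y := Y ^ 2 ^ (m - 1) with hydef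
    set z := Z ^ 2 ^ (m - 1) with hzdef
    set w := W ^ 2 ^ (m - 1) with hwdef
    have hx2 : x ^ 2 = X := hρsq X hX
    have hy2 : y ^ 2 = Y := hρsq Y hY
    have hz2 : z ^ 2 = Z := hρsq Z hZ
    have hw2 : w ^ 2 = W := hρsq W hW
    have hπx : piMap f x = (piMap f X) ^ 2 ^ (m - 1) := by rw [hxdef, map_pow]
    have hπy : piMap f y = (piMap f Y) ^ 2 ^ (m - 1) := by rw [hydef, map_pow]
    have hπz : piMap f z = (piMap f Z) ^ 2 ^ (m - 1) := by rw [hzdef, map_pow]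
    have hπw : piMap f w = (piMap f W) ^ 2 ^ (m - 1) := by rw [hwdef, map_pow]
    set E : AdjoinRoot f := x*y + x*z + x*w + y*z + y*w + z*w + w*w with hE
    have hid : X + Y + Z - W = (x + y + z + w) ^ 2 + 2 * E := by
      rw [← hx2, ← hy2, ← hz2, ← hw2]
      linear_combination (-(w*w) - (x*y + x*z + x*w + y*z + y*w + z*w)) * h4
    have hπE : piMap f E
        = (piMap f X) ^ 2 ^ (m - 1) * (piMap f Y) ^ 2 ^ (m - 1)
            + (piMap f X) ^ 2 ^ (m - 1) * (piMap f Z) ^ 2 ^ (m - 1)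
            + (piMap f X) ^ 2 ^ (m - 1) * (piMap f W) ^ 2 ^ (m - 1)
            + (piMap f Y) ^ 2 ^ (m - 1) * (piMap f Z) ^ 2 ^ (m - 1)
            + (piMap f Y) ^ 2 ^ (m - 1) * (piMap f W) ^ 2 ^ (m - 1)
            + (piMap f Z) ^ 2 ^ (m - 1) * (piMap f W) ^ 2 ^ (m - 1)
            + (piMap f W) ^ 2 ^ (m - 1) * (piMap f W) ^ 2 ^ (m - 1) := by
      rw [hE]
      simp only [map_add, map_mul, hπx, hπy, hπz, hπw]
    have hπsumeq : piMap f (x + y + z + w)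
        = (piMap f X) ^ 2 ^ (m - 1) + (piMap f Y) ^ 2 ^ (m - 1) + (piMap f Z) ^ 2 ^ (m - 1)
            + (piMap f W) ^ 2 ^ (m - 1) := by
      simp only [map_add, hπx, hπy, hπz, hπw]
    constructor
    · intro hC
      have hCs : C = (x + y + z + w) ^ 2 + 2 * E := by rw [← hC, hid]
      have h1 : piMap f C = (piMap f (x + y + z + w)) ^ 2 := by
        rw [hCs, map_add, map_pow, map_mul, map_ofNat, hS2, zero_mul, add_zero]
      have hπsum : piMap f (x + y + z + w) = σS :=
        hSsqinj _ _ (by rw [hσSsq]; exact h1.symm)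
      have hs2 : (x + y + z + w) ^ 2 = σh ^ 2 :=
        hsqeq _ _ (by rw [hπsum]; exact hσh.symm)
      have h2E : 2 * E = 2 * g := by
        linear_combination -hCs - hs2 - hσhsq + hg
      have hπE2 : piMap f E = γS := by rw [hγSdef]; exact h2inj _ _ h2E
      exact ⟨by rw [← hπsumeq]; exact hπsum, by rw [← hπE]; exact hπE2⟩
    · rintro ⟨h1, h2'⟩
      have hπsum : piMap f (x + y + z + w) = σS := by rw [hπsumeq]; exact h1
      have hs2 : (x + y + z + w) ^ 2 = σh ^ 2 :=
        hsqeq _ _ (by rw [hπsum]; exact hσh.symm)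
      have hπE2 : piMap f E = γS := by rw [hπE]; exact h2'
      have h2E : 2 * E = 2 * g := h2eq _ _ (by rw [hπE2, hγSdef])
      rw [hid]
      linear_combination hs2 + hσhsq + h2E - hg
  -- first equivalence : solutions in R ≃ solutions in S (4 variables)
  have Ecard : Nat.card {t : AdjoinRoot f × AdjoinRoot f × AdjoinRoot f × AdjoinRoot f //
        t.1 ^ 2 ^ m = t.1 ∧ t.2.1 ^ 2 ^ m = t.2.1 ∧ t.2.2.1 ^ 2 ^ m = t.2.2.1 ∧
        t.2.2.2 ^ 2 ^ m = t.2.2.2 ∧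
        t.1 + t.2.1 + t.2.2.1 - t.2.2.2 = C} =
      Nat.card {u : S × S × S × S //
        u.1 + u.2.1 + u.2.2.1 + u.2.2.2 = σS ∧
        u.1 * u.2.1 + u.1 * u.2.2.1 + u.1 * u.2.2.2 + u.2.1 * u.2.2.1 + u.2.1 * u.2.2.2
          + u.2.2.1 * u.2.2.2 + u.2.2.2 * u.2.2.2 = γS} := by
    refine Nat.card_congr ?_
    refine
      { toFun := fun t =>
          ⟨((piMap f t.1.1) ^ 2 ^ (m - 1), (piMap f t.1.2.1) ^ 2 ^ (m - 1),
            (piMap f t.1.2.2.1) ^ 2 ^ (m - 1), (piMap f t.1.2.2.2) ^ 2 ^ (m - 1)),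
            (big t.1.1 t.1.2.1 t.1.2.2.1 t.1.2.2.2 t.2.1 t.2.2.1 t.2.2.2.1 t.2.2.2.2.1).mp
              t.2.2.2.2.2⟩
        invFun := fun u =>
          ⟨((L u.1.1) ^ 2, (L u.1.2.1) ^ 2, (L u.1.2.2.1) ^ 2, (L u.1.2.2.2) ^ 2),
            hRsq _, hRsq _, hRsq _, hRsq _,
            (big _ _ _ _ (hRsq _) (hRsq _) (hRsq _) (hRsq _)).mpr
              (by rw [hρL u.1.1, hρL u.1.2.1, hρL u.1.2.2.1, hρL u.1.2.2.2]
                  exact u.2)⟩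
        left_inv := ?_
        right_inv := ?_ }
    · rintro ⟨⟨X, Y, Z, W⟩, hX, hY, hZ, hW, hC⟩
      refine Subtype.ext ?_
      have hcomp : ∀ (A : AdjoinRoot f), A ^ 2 ^ m = A →
          (L ((piMap f A) ^ 2 ^ (m - 1))) ^ 2 = A := by
        intro A hA
        have := hsqeq (L ((piMap f A) ^ 2 ^ (m - 1))) (A ^ 2 ^ (m - 1))
          (by rw [hL, map_pow])
        rw [this]
        exact hρsq A hA
      simp only [Prod.mk.injEq]
      exact ⟨hcomp X hX, hcomp Y hY, hcomp Z hZ, hcomp W hW⟩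
    · rintro ⟨⟨a, b, c, d⟩, hu⟩
      refine Subtype.ext ?_
      simp only [Prod.mk.injEq]
      exact ⟨hρL a, hρL b, hρL c, hρL d⟩
  -- second equivalence : 4 variables ≃ 3 variables
  have E2card : Nat.card {u : S × S × S × S //
        u.1 + u.2.1 + u.2.2.1 + u.2.2.2 = σS ∧
        u.1 * u.2.1 + u.1 * u.2.2.1 + u.1 * u.2.2.2 + u.2.1 * u.2.2.1 + u.2.1 * u.2.2.2
          + u.2.2.1 * u.2.2.2 + u.2.2.2 * u.2.2.2 = γS} =
      Nat.card {v : S × S × S //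
        v.1 * v.2.1 + v.1 * v.2.2 + v.2.1 * v.2.2 + σS * (v.1 + v.2.1 + v.2.2)
          = γS + σS * σS} := by
    refine Nat.card_congr ?_
    refine
      { toFun := fun u => ⟨(u.1.1, u.1.2.1, u.1.2.2.1), ?_⟩
        invFun := fun v =>
          ⟨(v.1.1, v.1.2.1, v.1.2.2, σS + v.1.1 + v.1.2.1 + v.1.2.2), ?_, ?_⟩
        left_inv := ?_
        right_inv := ?_ }
    · obtain ⟨⟨a, b, c, d⟩, h1, h2'⟩ := u
      dsimp only at h1 h2' ⊢
      have hd : d = σS + a + b + c := by linear_combination h1 - (a + b + c) * hS2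
      rw [hd] at h2'
      linear_combination h2' - (σS * (a + b + c) + (a + b + c) ^ 2 + σS * σS) * hS2
    · obtain ⟨⟨a, b, c⟩, hv⟩ := v
      dsimp only at hv ⊢
      linear_combination (a + b + c) * hS2
    · obtain ⟨⟨a, b, c⟩, hv⟩ := v
      dsimp only at hv ⊢
      linear_combination hv + (σS * (a + b + c) + (a + b + c) ^ 2 + σS * σS) * hS2
    · rintro ⟨⟨a, b, c, d⟩, h1, h2'⟩
      refine Subtype.ext ?_
      simp only [Prod.mk.injEq]
      refine ⟨trivial, trivial, trivial, ?_⟩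
      have hd : d = σS + a + b + c := by
        dsimp only at h1
        linear_combination h1 - (a + b + c) * hS2
      exact hd.symm
    · rintro ⟨⟨a, b, c⟩, hv⟩
      rfl
  -- condition A
  have condA : (∃ x : AdjoinRoot f, C = 2 * x) ↔ σS = 0 := by
    constructor
    · rintro ⟨x, hx⟩
      have : piMap f C = 0 := by rw [hx, map_mul, map_ofNat, hS2, zero_mul]
      rw [hσSdef, this]
      exact zero_pow (by positivity)
    · intro h
      have : piMap f C = 0 := by rw [← hσSsq, h]; ring
      obtain ⟨x, hx⟩ := (hker C).mp this
      exact ⟨x, hx⟩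
  -- condition B
  have condB : (∃ X Y : AdjoinRoot f, X ^ 2 ^ m = X ∧ Y ^ 2 ^ m = Y ∧ C = X + Y) ↔
      (∃ a b : S, a + b = σS ∧ a * b = γS) := by
    constructor
    · rintro ⟨X, Y, hX, hY, hC⟩
      set x := X ^ 2 ^ (m - 1) with hxdef
      set y := Y ^ 2 ^ (m - 1) with hydef
      have hx2 : x ^ 2 = X := hρsq X hX
      have hy2 : y ^ 2 = Y := hρsq Y hY
      have hid2 : C = (x + y) ^ 2 + 2 * (x * y) := by
        rw [hC, ← hx2, ← hy2]
        linear_combination (-(x*y)) * h4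
      have h1 : piMap f C = (piMap f (x + y)) ^ 2 := by
        rw [hid2, map_add, map_pow, map_mul, map_ofNat, hS2, zero_mul, add_zero]
      have hπsum : piMap f (x + y) = σS :=
        hSsqinj _ _ (by rw [hσSsq]; exact h1.symm)
      have hs2 : (x + y) ^ 2 = σh ^ 2 :=
        hsqeq _ _ (by rw [hπsum]; exact hσh.symm)
      have h2xy : 2 * (x * y) = 2 * g := by
        linear_combination -hid2 - hs2 - hσhsq + hg
      have hab : piMap f x * piMap f y = γS := by
        rw [hγSdef, ← map_mul]
        exact h2inj _ _ h2xy
      exact ⟨piMap f x, piMap f y, by rw [← map_add]; exact hπsum, hab⟩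
    · rintro ⟨a, b, h1, h2'⟩
      refine ⟨(L a) ^ 2, (L b) ^ 2, hRsq _, hRsq _, ?_⟩
      have hπsum : piMap f (L a + L b) = σS := by
        rw [map_add, hL, hL]; exact h1
      have hs2 : (L a + L b) ^ 2 = σh ^ 2 :=
        hsqeq _ _ (by rw [hπsum]; exact hσh.symm)
      have hπxy : piMap f (L a * L b) = γS := by
        rw [map_mul, hL, hL]; exact h2'
      have h2xy : 2 * (L a * L b) = 2 * g := h2eq _ _ (by rw [hπxy, hγSdef])
      linear_combination -hs2 - hσhsq - h2xy + hg + (L a * L b) * h4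
  -- put everything together
  rw [Ecard, E2card, countA hS2 σS γS, hq]
  have h1q : 1 ≤ 2 ^ m := Nat.one_le_two_pow
  have hQQ : 2 ^ m ≤ 2 ^ m * 2 ^ m := Nat.le_mul_of_pos_left _ (by positivity)
  by_cases hσ0 : σS = 0
  · rw [if_pos (condA.mpr hσ0)]
    have hroot : Nat.card {x : S // x * (x + σS) = γS} = 1 := by
      rw [hσ0]; exact rootcount_zero hS2 γS
    rw [hroot]
    rw [show 2 * m = m * 2 by ring, pow_mul, pow_two]
    omega
  · rw [if_neg (fun h => hσ0 (condA.mp h))]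
    rw [rootcount_ne hS2 σS γS hσ0]
    by_cases hsol : ∃ a b : S, a + b = σS ∧ a * b = γS
    · rw [if_pos hsol, if_pos (condB.mpr hsol)]
      rw [pow_two, add_mul, one_mul]
      omega
    · rw [if_neg hsol, if_neg (fun h => hsol (condB.mp h))]
      rw [pow_two, Nat.sub_mul, one_mul]
      omega
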